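/- Let p and q be positive probability mass functions on a finite set V and s ≥ 0. Define p_s(w) = p(w)·(p(w)/q(w))^s / Z with Z = Σ_v p(v)·(p(v)/q(v))^s. Then for s = 0, p_s = p, and as s → ∞, p_s concentrates on the argmax set of p(w)/q(w): specifically, if w* uniquely maximizes p(w)/q(w) over V, then p_s(w*) → 1 as s → ∞. -/
import Mathlib


/-- For positive pmfs `p, q` on a finite set and the CFG distribution
`p_s(w) ∝ p(w)·(p(w)/q(w))^s`: at `s = 0` we recover `p`, and if `w₀` uniquely maximizes
`p(w)/q(w)` then `p_s(w₀) → 1` as `s → ∞`. -/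
theorem stmt_8 {V : Type*} [Fintype V] [Nonempty V]
    (p q : V → ℝ) (hp : ∀ w, 0 < p w) (hq : ∀ w, 0 < q w)
    (hpsum : ∑ w, p w = 1) (hqsum : ∑ w, q w = 1)
    (ps : ℝ → V → ℝ)
    (hdef : ∀ s w, ps s w
      = p w * (p w / q w) ^ s / ∑ v, p v * (p v / q v) ^ s) :
    (∀ w, ps 0 w = p w) ∧
    ∀ w₀ : V, (∀ w, w ≠ w₀ → p w / q w < p w₀ / q w₀) →
      Filter.Tendsto (fun s => ps s w₀) Filter.atTop (nhds 1) := by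
  have hr : ∀ w, 0 < p w / q w := fun w => div_pos (hp w) (hq w)
  constructor
  · intro w
    simp [hdef, Real.rpow_zero, hpsum]
  · intro w₀ hmax
    -- rewrite ps s w₀ as inverse of a sum
    have key : ∀ s : ℝ, ps s w₀
        = (∑ v, (p v / p w₀) * (p v / q v / (p w₀ / q w₀)) ^ s)⁻¹ := by
      intro s
      rw [hdef]
      rw [div_eq_iff (by
        refine (Finset.sum_pos (fun v _ => ?_) ⟨w₀, Finset.mem_univ _⟩).ne'
        exact mul_pos (hp v) (Real.rpow_pos_of_pos (hr v) s))]
      rw [inv_mul_eq_div, eq_div_iff (by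
        refine (Finset.sum_pos (fun v _ => ?_) ⟨w₀, Finset.mem_univ _⟩).ne'
        exact mul_pos (div_pos (hp v) (hp w₀))
          (Real.rpow_pos_of_pos (div_pos (hr v) (hr w₀)) s))]
      rw [Finset.mul_sum]
      refine Finset.sum_congr rfl fun v _ => ?_
      rw [Real.div_rpow (hr v).le (hr w₀).le]
      field_simp [(hp w₀).ne', (Real.rpow_pos_of_pos (hr w₀) s).ne']
    simp_rw [key]
    classical
    have : Filter.Tendsto
        (fun s : ℝ => ∑ v, (p v / p w₀) * (p v / q v / (p w₀ / q w₀)) ^ s)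
        Filter.atTop (nhds 1) := by
      have h1 : (1:ℝ) = ∑ v, (if v = w₀ then (1:ℝ) else 0) := by
        rw [Finset.sum_ite_eq' Finset.univ w₀ (fun _ => (1:ℝ))]
        simp
      rw [h1]
      refine tendsto_finset_sum _ fun v _ => ?_
      by_cases hv : v = w₀
      · subst hv
        simp only [if_true]
        simpa [div_self (hp v).ne', div_self (hr v).ne', Real.one_rpow]
          using (tendsto_const_nhds : Filter.Tendsto (fun _ : ℝ => (1:ℝ)) Filter.atTop (nhds 1))
      · simp only [hv, if_false]
        have hb : p v / q v / (p w₀ / q w₀) < 1 :=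
          (div_lt_one (hr w₀)).2 (hmax v hv)
        have hb0 : (0:ℝ) < p v / q v / (p w₀ / q w₀) := div_pos (hr v) (hr w₀)
        have := (tendsto_rpow_atTop_of_base_lt_one _ (by linarith) hb).const_mul
          (p v / p w₀)
        simpa using this
    simpa using this.inv₀ one_ne_zero
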